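/- Let 𝓜 ∈ M_ℍ(n,n) be hyperhermitian, and suppose 𝓔 ∈ U_ℍ(n) and real numbers ν₀,…,ν_{n−1} satisfy 𝓔*𝓜𝓔 = diag(ν₀,…,ν_{n−1}). Let ω_𝓜 = Σ_{A,B=0}^{2n−1} [τ(𝓜)J]_{AB} ω^A∧ω^B ∈ Λ²ℂ^{2n}. Then the n-fold exterior power satisfies ω_𝓜∧⋯∧ω_𝓜 = 2ⁿ·n!·(ν₀⋯ν_{n−1})·Ω_{2n}. (The number ν₀⋯ν_{n−1} equals the Moore determinant of 𝓜.) -/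

import Mathlib

open scoped Quaternion
open Matrix Sum

noncomputable section

/-- The complex part `a` in the decomposition `q = a + b·j` of a quaternion. -/
def qa (q : ℍ[ℝ]) : ℂ := ⟨q.re, q.imI⟩

/-- The complex part `b` in the decomposition `q = a + b·j` of a quaternion. -/
def qb (q : ℍ[ℝ]) : ℂ := ⟨q.imJ, q.imK⟩

/-- Entrywise complex conjugation of a complex matrix. -/
def conjM {m k : Type*} (M : Matrix m k ℂ) : Matrix m k ℂ := M.map (starRingEnd ℂ)

/-- The embedding τ : M_ℍ(p,m) → M_ℂ(2p,2m), τ(a + b·j) = [[a, −b],[conj b, conj a]]. -/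
def tau {p m : ℕ} (M : Matrix (Fin p) (Fin m) ℍ[ℝ]) :
    Matrix (Fin p ⊕ Fin p) (Fin m ⊕ Fin m) ℂ :=
  Matrix.fromBlocks (M.map qa) (-(M.map qb)) (conjM (M.map qb)) (conjM (M.map qa))

/-- The standard symplectic matrix J = [[0, Iₙ],[−Iₙ, 0]]. -/
def Jmat (n : ℕ) : Matrix (Fin n ⊕ Fin n) (Fin n ⊕ Fin n) ℂ :=
  Matrix.fromBlocks 0 1 (-1) 0

/-- index set {0,…,2n−1}, as two blocks. -/
abbrev Idx (n : ℕ) := Fin n ⊕ Fin n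

/-- ℂ^{2n}. -/
abbrev Vc (n : ℕ) := Idx n → ℂ

/-- The exterior algebra of ℂ^{2n}. -/
abbrev EA (n : ℕ) := ExteriorAlgebra ℂ (Vc n)

/-- Basis 1-vectors ω^A of the exterior algebra. -/
def ω {n : ℕ} (A : Idx n) : EA n := ExteriorAlgebra.ι ℂ (Pi.single A 1)

/-- Ω_{2n} = ω⁰∧ω^n∧ω¹∧ω^{n+1}∧…∧ω^{n−1}∧ω^{2n−1}. -/
def Ωn (n : ℕ) : EA n := (List.ofFn fun l : Fin n => ω (inl l) * ω (inr l)).prod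

/-- β_n = Σ_l ω^l∧ω^{n+l}. -/
def βn (n : ℕ) : EA n := ∑ l : Fin n, ω (inl l) * ω (inr l)

/-- Induced action of a 2n×2n complex matrix on the exterior algebra,
determined by N.ω^A = Σ_B N_{AB} ω^B. -/
def actE {n : ℕ} (N : Matrix (Idx n) (Idx n) ℂ) : EA n →ₐ[ℂ] EA n :=
  ExteriorAlgebra.map (Matrix.mulVecLin Nᵀ)

/-- ℝ^{4n}. -/
abbrev V4 (n : ℕ) := Fin (4 * n) → ℝ

/-- The coordinate index 4l+β. -/
def X {n : ℕ} (l : Fin n) (β : Fin 4) : Fin (4 * n) :=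
  ⟨4 * l.val + β.val, by have h1 := l.isLt; have h2 := β.isLt; omega⟩

/-- Partial derivative of a complex-valued function on ℝ^{4n}. -/
def pd {n : ℕ} (a : Fin (4 * n)) (f : V4 n → ℂ) : V4 n → ℂ :=
  fun q => fderiv ℝ f q (Pi.single a 1)

/-- The operators ∇_{Aα}, α = 0' (α=0) or 1' (α=1). -/
def nabla {n : ℕ} (A : Idx n) (α : Fin 2) (f : V4 n → ℂ) : V4 n → ℂ :=
  fun q =>
    match A with
    | Sum.inl l =>
        if α = 0 then pd (X l 0) f q + Complex.I * pd (X l 1) f q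
        else -pd (X l 2) f q - Complex.I * pd (X l 3) f q
    | Sum.inr l =>
        if α = 0 then pd (X l 2) f q - Complex.I * pd (X l 3) f q
        else pd (X l 0) f q - Complex.I * pd (X l 1) f q

/-- ∇_{Aα} applied to a real-valued function. -/
def nablaR {n : ℕ} (A : Idx n) (α : Fin 2) (u : V4 n → ℝ) : V4 n → ℂ :=
  nabla A α (fun x => ((u x : ℝ) : ℂ))

/-- Δ_{AB}u = ½(∇_{A0'}∇_{B1'}u − ∇_{B0'}∇_{A1'}u). -/
def Delta {n : ℕ} (A B : Idx n) (u : V4 n → ℝ) : V4 n → ℂ :=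
  fun q => (1 / 2 : ℂ) *
    (nabla A 0 (nabla B 1 (fun x => ((u x : ℝ) : ℂ))) q
      - nabla B 0 (nabla A 1 (fun x => ((u x : ℝ) : ℂ))) q)

/-- The Baston operator Δu = Σ_{A,B} Δ_{AB}u · ω^A∧ω^B. -/
def Baston {n : ℕ} (u : V4 n → ℝ) (q : V4 n) : EA n :=
  ∑ A : Idx n, ∑ B : Idx n, Delta A B u q • (ω A * ω B)

/-- The quaternion units. -/
def iH : ℍ[ℝ] := ⟨0, 1, 0, 0⟩
def jH : ℍ[ℝ] := ⟨0, 0, 1, 0⟩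
def kH : ℍ[ℝ] := ⟨0, 0, 0, 1⟩

/-- Partial derivative of a quaternion-valued function on ℝ^{4n}. -/
def pdH {n : ℕ} (a : Fin (4 * n)) (f : V4 n → ℍ[ℝ]) : V4 n → ℍ[ℝ] :=
  fun q => fderiv ℝ f q (Pi.single a 1)

/-- Partial derivative of a real-valued function on ℝ^{4n}. -/
def pdR {n : ℕ} (a : Fin (4 * n)) (f : V4 n → ℝ) : V4 n → ℝ :=
  fun q => fderiv ℝ f q (Pi.single a 1)

/-- ∂u/∂q_k = (∂_{x_{4k}} − i∂_{x_{4k+1}} − j∂_{x_{4k+2}} − k∂_{x_{4k+3}})u for real u. -/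
def dq {n : ℕ} (k : Fin n) (u : V4 n → ℝ) : V4 n → ℍ[ℝ] :=
  fun q => ⟨pdR (X k 0) u q, -pdR (X k 1) u q, -pdR (X k 2) u q, -pdR (X k 3) u q⟩

/-- ∂/∂q̄_l = ∂_{x_{4l}} + i∂_{x_{4l+1}} + j∂_{x_{4l+2}} + k∂_{x_{4l+3}} on ℍ-valued functions. -/
def dqbar {n : ℕ} (l : Fin n) (f : V4 n → ℍ[ℝ]) : V4 n → ℍ[ℝ] :=
  fun q => pdH (X l 0) f q + iH * pdH (X l 1) f q + jH * pdH (X l 2) f q + kH * pdH (X l 3) f q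

/-- The quaternionic Hessian of a real function u. -/
def Hess {n : ℕ} (u : V4 n → ℝ) (q : V4 n) : Matrix (Fin n) (Fin n) ℍ[ℝ] :=
  Matrix.of fun l k => dqbar l (dq k u) q

/-- ω^I = ω^{i₁}∧…∧ω^{i_p} for a multi-index I. -/
def ωProd {n p : ℕ} (I : Fin p → Idx n) : EA n :=
  (List.ofFn fun j => ω (I j)).prod

/-- The Λ^pℂ^{2n}-valued function with coefficient functions f: F = Σ_I f_I ω^I. -/
def formVal {n p : ℕ} (f : (Fin p → Idx n) → V4 n → ℂ) (q : V4 n) : EA n :=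
  ∑ I : Fin p → Idx n, f I q • ωProd I

/-- Coefficients of d_α F for F with coefficients f:
d_αF = Σ_{A,I} ∇_{Aα}f_I · ω^A∧ω^I. -/
def dcoef {n p : ℕ} (α : Fin 2) (f : (Fin p → Idx n) → V4 n → ℂ) :
    (Fin (p + 1) → Idx n) → V4 n → ℂ :=
  fun J => nabla (J 0) α (f (Fin.tail J))

/-- Coefficients of the wedge product F∧G. -/
def wedgeCoef {n p q : ℕ} (f : (Fin p → Idx n) → V4 n → ℂ)
    (g : (Fin q → Idx n) → V4 n → ℂ) : (Fin (p + q) → Idx n) → V4 n → ℂ :=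
  fun J x => f (fun i => J (Fin.castAdd q i)) x * g (fun i => J (Fin.natAdd p i)) x

/-- The complex coordinate functions z^{Aα}. -/
def zc {n : ℕ} (A : Idx n) (α : Fin 2) : V4 n → ℂ :=
  fun x =>
    match A with
    | Sum.inl l => if α = 0 then ⟨x (X l 0), -x (X l 1)⟩ else ⟨-x (X l 2), x (X l 3)⟩
    | Sum.inr l => if α = 0 then ⟨x (X l 2), x (X l 3)⟩ else ⟨x (X l 0), x (X l 1)⟩

/-- The quaternionic vector associated to a point of ℝ^{4n}. -/
def quatv {n : ℕ} (v : V4 n) : Fin n → ℍ[ℝ] :=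
  fun l => ⟨v (X l 0), v (X l 1), v (X l 2), v (X l 3)⟩

/-- The four real components of a quaternion. -/
def comp4 (q : ℍ[ℝ]) : Fin 4 → ℝ := ![q.re, q.imI, q.imJ, q.imK]

/-- The real-linear action of a quaternionic matrix 𝓤 on ℝ^{4n} ≅ ℍⁿ, q ↦ 𝓤q. -/
def act {n : ℕ} (U : Matrix (Fin n) (Fin n) ℍ[ℝ]) (v : V4 n) : V4 n :=
  fun a => comp4 ((U *ᵥ quatv v) ⟨a.val / 4, by have := a.isLt; omega⟩)
    ⟨a.val % 4, by omega⟩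


section Helpers

lemma qa_mul (p q : ℍ[ℝ]) : qa (p*q) = qa p * qa q - qb p * (starRingEnd ℂ) (qb q) := by
  apply Complex.ext <;>
  simp [qa, qb, Complex.ext_iff, Quaternion.re_mul, Quaternion.imI_mul] <;> ring

lemma qb_mul (p q : ℍ[ℝ]) : qb (p*q) = qa p * qb q + qb p * (starRingEnd ℂ) (qa q) := by
  apply Complex.ext <;>
  simp [qa, qb, Complex.ext_iff, Quaternion.imJ_mul, Quaternion.imK_mul] <;> ring

def qaHom : ℍ[ℝ] →+ ℂ where
  toFun := qa
  map_zero' := by simp [qa, Complex.ext_iff]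
  map_add' x y := by simp [qa, Complex.ext_iff]

def qbHom : ℍ[ℝ] →+ ℂ where
  toFun := qb
  map_zero' := by simp [qb, Complex.ext_iff]
  map_add' x y := by simp [qb, Complex.ext_iff]

lemma mapqa_mul {p m k : ℕ} (P : Matrix (Fin p) (Fin m) ℍ[ℝ]) (Q : Matrix (Fin m) (Fin k) ℍ[ℝ]) :
    (P*Q).map qa = P.map qa * Q.map qa - P.map qb * conjM (Q.map qb) := by
  ext i j
  simp only [Matrix.map_apply, Matrix.mul_apply, Matrix.sub_apply, conjM]
  rw [show qa = qaHom from rfl, map_sum, ← Finset.sum_sub_distrib]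
  exact Finset.sum_congr rfl fun x _ => qa_mul _ _

lemma mapqb_mul {p m k : ℕ} (P : Matrix (Fin p) (Fin m) ℍ[ℝ]) (Q : Matrix (Fin m) (Fin k) ℍ[ℝ]) :
    (P*Q).map qb = P.map qa * Q.map qb + P.map qb * conjM (Q.map qa) := by
  ext i j
  simp only [Matrix.map_apply, Matrix.mul_apply, Matrix.add_apply, conjM]
  rw [show qb = qbHom from rfl, map_sum, ← Finset.sum_add_distrib]
  exact Finset.sum_congr rfl fun x _ => qb_mul _ _

lemma conjM_mul {p m k : ℕ} (P : Matrix (Fin p) (Fin m) ℂ) (Q : Matrix (Fin m) (Fin k) ℂ) :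
    conjM (P * Q) = conjM P * conjM Q := Matrix.map_mul

@[simp] lemma conjM_conjM {m k : Type*} (P : Matrix m k ℂ) : conjM (conjM P) = P := by
  ext i j; simp [conjM]

lemma conjM_add {m k : Type*} (P Q : Matrix m k ℂ) : conjM (P + Q) = conjM P + conjM Q := by
  ext i j; simp [conjM]

lemma conjM_sub {m k : Type*} (P Q : Matrix m k ℂ) : conjM (P - Q) = conjM P - conjM Q := by
  ext i j; simp [conjM]

lemma conjM_neg {m k : Type*} (P : Matrix m k ℂ) : conjM (-P) = -(conjM P) := by
  ext i j; simp [conjM]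

lemma tau_mul {p m k : ℕ} (P : Matrix (Fin p) (Fin m) ℍ[ℝ]) (Q : Matrix (Fin m) (Fin k) ℍ[ℝ]) :
    tau (P * Q) = tau P * tau Q := by
  simp only [tau, Matrix.fromBlocks_multiply, mapqa_mul, mapqb_mul, conjM_mul]
  rw [conjM_add, conjM_sub, conjM_mul, conjM_mul, conjM_mul, conjM_mul, conjM_conjM, conjM_conjM]
  simp only [sub_eq_add_neg, Matrix.neg_mul, Matrix.mul_neg, neg_add]
  abel_nf

lemma map_qa_one {p : ℕ} : (1 : Matrix (Fin p) (Fin p) ℍ[ℝ]).map qa = 1 := by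
  ext i j
  simp only [Matrix.map_apply, Matrix.one_apply]
  split <;> simp [qa, Complex.ext_iff, Quaternion.re_one]

lemma map_qb_one {p : ℕ} : (1 : Matrix (Fin p) (Fin p) ℍ[ℝ]).map qb = 0 := by
  ext i j
  simp only [Matrix.map_apply, Matrix.one_apply]
  split <;> simp [qb, Complex.ext_iff]

lemma conjM_one {p : ℕ} : conjM (1 : Matrix (Fin p) (Fin p) ℂ) = 1 := by
  ext i j; simp [conjM, Matrix.one_apply, apply_ite]

lemma conjM_zero {p m : ℕ} : conjM (0 : Matrix (Fin p) (Fin m) ℂ) = 0 := by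
  ext i j; simp [conjM]

lemma tau_one {p : ℕ} : tau (1 : Matrix (Fin p) (Fin p) ℍ[ℝ]) = 1 := by
  rw [tau, map_qa_one, map_qb_one, conjM_zero, conjM_one, neg_zero, Matrix.fromBlocks_one]

lemma map_qa_conjT {p : ℕ} (M : Matrix (Fin p) (Fin p) ℍ[ℝ]) :
    Mᴴ.map qa = (conjM (M.map qa))ᵀ := by
  ext i j
  simp [Matrix.conjTranspose_apply, conjM, qa, Complex.ext_iff]

lemma map_qb_conjT {p : ℕ} (M : Matrix (Fin p) (Fin p) ℍ[ℝ]) :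
    Mᴴ.map qb = -((M.map qb)ᵀ) := by
  ext i j
  simp [Matrix.conjTranspose_apply, qb, Complex.ext_iff]

lemma tau_conjT_J {p : ℕ} (M : Matrix (Fin p) (Fin p) ℍ[ℝ]) :
    tau Mᴴ * Jmat p = Jmat p * (tau M)ᵀ := by
  rw [tau, tau, Jmat, map_qa_conjT, map_qb_conjT, Matrix.fromBlocks_transpose,
    Matrix.fromBlocks_multiply, Matrix.fromBlocks_multiply]
  have h1 : ∀ (A : Matrix (Fin p) (Fin p) ℂ), conjM Aᵀ = (conjM A)ᵀ := by
    intro A; ext i j; simp [conjM]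
  rw [conjM_neg, h1, h1, conjM_conjM]
  simp only [Matrix.mul_zero, Matrix.zero_mul, Matrix.mul_one, Matrix.one_mul,
    Matrix.mul_neg, Matrix.neg_mul, zero_add, add_zero, neg_neg,
    Matrix.transpose_neg, neg_zero, add_zero]


lemma iota_swap {n : ℕ} (x y : Vc n) :
    ExteriorAlgebra.ι ℂ x * ExteriorAlgebra.ι ℂ y = -(ExteriorAlgebra.ι ℂ y * ExteriorAlgebra.ι ℂ x) :=
  eq_neg_of_add_eq_zero_left (ExteriorAlgebra.ι_add_mul_swap x y)


lemma omega_move1 {n : ℕ} (A C D : Idx n) :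
    ω A * (ω C * ω D) = (ω C * ω D) * ω A := by
  unfold ω
  rw [← mul_assoc, iota_swap, neg_mul, mul_assoc, iota_swap (Pi.single A 1), mul_neg, neg_neg,
    ← mul_assoc]

lemma omega_pair_comm {n : ℕ} (A B C D : Idx n) :
    (ω A * ω B) * (ω C * ω D) = (ω C * ω D) * (ω A * ω B) := by
  rw [mul_assoc, omega_move1 B, ← mul_assoc, omega_move1 A, mul_assoc]

lemma omega_sq {n : ℕ} (A : Idx n) : ω A * ω A = 0 := ExteriorAlgebra.ι_sq_zero _

lemma omega_pair_sq {n : ℕ} (A B : Idx n) : (ω A * ω B) * (ω A * ω B) = 0 := by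
  rw [mul_assoc, omega_move1 B, mul_assoc (ω A) (ω B) (ω B), omega_sq, mul_zero, mul_zero]

lemma map_omega {n : ℕ} (N : Matrix (Idx n) (Idx n) ℂ) (C : Idx n) :
    (ExteriorAlgebra.map (Matrix.mulVecLin N)) (ω C) = ∑ A, N A C • ω A := by
  rw [ω, ExteriorAlgebra.map_apply_ι]
  have h : Matrix.mulVecLin N (Pi.single C 1) = ∑ A, N A C • (Pi.single A 1 : Vc n) := by
    rw [Matrix.mulVecLin_apply, Matrix.mulVec_single]
    ext i
    simp [Pi.single_apply, Finset.sum_apply, mul_comm]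
  rw [h, map_sum]
  simp only [_root_.map_smul, ω]

lemma sum4 {α : Type*} [AddCommMonoid α] {ι : Type*} [Fintype ι] (f : ι → ι → ι → ι → α) :
    ∑ C, ∑ D, ∑ A, ∑ B, f C D A B = ∑ A, ∑ B, ∑ C, ∑ D, f C D A B := by
  have h1 : ∑ C, ∑ D, ∑ A, ∑ B, f C D A B = ∑ C, ∑ A, ∑ D, ∑ B, f C D A B :=
    Finset.sum_congr rfl fun C _ => Finset.sum_comm
  have h2 : ∑ C, ∑ A, ∑ D, ∑ B, f C D A B = ∑ A, ∑ C, ∑ D, ∑ B, f C D A B :=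
    Finset.sum_comm
  have h3 : ∑ A, ∑ C, ∑ D, ∑ B, f C D A B = ∑ A, ∑ C, ∑ B, ∑ D, f C D A B :=
    Finset.sum_congr rfl fun A _ => Finset.sum_congr rfl fun C _ => Finset.sum_comm
  have h4 : ∑ A, ∑ C, ∑ B, ∑ D, f C D A B = ∑ A, ∑ B, ∑ C, ∑ D, f C D A B :=
    Finset.sum_congr rfl fun A _ => Finset.sum_comm
  rw [h1, h2, h3, h4]

lemma transform {n : ℕ} (N S : Matrix (Idx n) (Idx n) ℂ) :
    (ExteriorAlgebra.map (Matrix.mulVecLin N)) (∑ A, ∑ B, S A B • (ω A * ω B))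
      = ∑ A, ∑ B, (N * S * Nᵀ) A B • (ω A * ω B) := by
  have hNS : ∀ A B, (N * S * Nᵀ) A B = ∑ C, ∑ D, N A C * S C D * N B D := by
    intro A B
    simp only [Matrix.mul_apply, Matrix.transpose_apply, Finset.sum_mul]
    rw [Finset.sum_comm]
  rw [map_sum]
  simp only [map_sum, _root_.map_smul, _root_.map_mul, map_omega]
  calc ∑ C, ∑ D, S C D • ((∑ A, N A C • ω A) * (∑ B, N B D • ω B))
      = ∑ C, ∑ D, ∑ A, ∑ B, (S C D * (N A C * N B D)) • (ω A * ω B) := by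
        simp only [Finset.sum_mul_sum, smul_mul_smul_comm, Finset.smul_sum, smul_smul]
    _ = ∑ A, ∑ B, ∑ C, ∑ D, (S C D * (N A C * N B D)) • (ω A * ω B) := sum4 _
    _ = ∑ A, ∑ B, (N * S * Nᵀ) A B • (ω A * ω B) := by
        refine Finset.sum_congr rfl fun A _ => Finset.sum_congr rfl fun B _ => ?_
        rw [hNS, Finset.sum_smul]
        refine Finset.sum_congr rfl fun C _ => ?_
        rw [Finset.sum_smul]
        refine Finset.sum_congr rfl fun D _ => ?_
        ring_nf
lemma list_sum_pow_eq_zero {R : Type*} [Ring R] :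
    ∀ (L : List R), (∀ x ∈ L, ∀ y ∈ L, x * y = y * x) → (∀ x ∈ L, x * x = 0) →
      ∀ k, L.length < k → L.sum ^ k = 0 := by
  intro L
  induction L with
  | nil =>
    intro _ _ k hk
    rw [List.sum_nil, zero_pow]
    omega
  | cons a L ih =>
    intro hcomm hsq k hk
    have hc : Commute a L.sum := Commute.list_sum_right _ _ fun y hy =>
      hcomm a (by simp) y (by simp [hy])
    rw [List.sum_cons, Commute.add_pow hc]
    apply Finset.sum_eq_zero
    intro m _
    match m with
    | 0 =>
      rw [pow_zero, one_mul, ih (fun x hx y hy => hcomm x (by simp [hx]) y (by simp [hy]))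
        (fun x hx => hsq x (by simp [hx])) _ (by simp at hk ⊢; omega), zero_mul]
    | 1 =>
      rw [ih (fun x hx y hy => hcomm x (by simp [hx]) y (by simp [hy]))
        (fun x hx => hsq x (by simp [hx])) (k - 1) (by simp at hk ⊢; omega), mul_zero, zero_mul]
    | (j+2) =>
      have : a ^ (j + 2) = a ^ j * (a * a) := by rw [pow_add, pow_two]
      rw [this, hsq a (by simp), mul_zero, zero_mul, zero_mul]

lemma list_sum_pow {R : Type*} [Ring R] :
    ∀ (L : List R), (∀ x ∈ L, ∀ y ∈ L, x * y = y * x) → (∀ x ∈ L, x * x = 0) →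
      L.sum ^ L.length = L.length.factorial • L.prod := by
  intro L
  induction L with
  | nil => simp
  | cons a L ih =>
    intro hcomm hsq
    have hcomm' : ∀ x ∈ L, ∀ y ∈ L, x * y = y * x := fun x hx y hy =>
      hcomm x (by simp [hx]) y (by simp [hy])
    have hsq' : ∀ x ∈ L, x * x = 0 := fun x hx => hsq x (by simp [hx])
    have hc : Commute a L.sum := Commute.list_sum_right _ _ fun y hy =>
      hcomm a (by simp) y (by simp [hy])
    rw [List.sum_cons, List.length_cons, Commute.add_pow hc]
    rw [Finset.sum_eq_single_of_mem 1 (by simp)]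
    · rw [pow_one, Nat.add_sub_cancel, Nat.choose_one_right, ih hcomm' hsq',
        List.prod_cons]
      rw [mul_smul_comm, smul_mul_assoc, ← (Nat.cast_commute (L.length + 1) (a * L.prod)).eq,
        ← nsmul_eq_mul, smul_smul, Nat.factorial_succ, mul_comm]
    · intro m _ hm
      match m with
      | 0 =>
        simp only [Nat.sub_zero, pow_zero, one_mul]
        rw [list_sum_pow_eq_zero L hcomm' hsq' (L.length + 1) (by omega), zero_mul]
      | 1 => exact absurd rfl hm
      | (j+2) =>
        have : a ^ (j + 2) = a ^ j * (a * a) := by rw [pow_add, pow_two]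
        rw [this, hsq a (by simp), mul_zero, zero_mul, zero_mul]

lemma sum_form {n : ℕ} (d : Fin n → ℂ) :
    (∑ A : Idx n, ∑ B : Idx n,
        (Matrix.fromBlocks 0 (Matrix.diagonal d) (-(Matrix.diagonal d)) 0 : Matrix (Idx n) (Idx n) ℂ) A B
          • (ω A * ω B))
      = ∑ l : Fin n, (2 * d l) • (ω (inl l) * ω (inr l)) := by
  rw [Fintype.sum_sum_type]
  have h1 : ∀ l : Fin n, (∑ B : Idx n,
      (Matrix.fromBlocks 0 (Matrix.diagonal d) (-(Matrix.diagonal d)) 0 : Matrix (Idx n) (Idx n) ℂ)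
        (inl l) B • (ω (inl l) * ω B)) = d l • (ω (inl l) * ω (inr l)) := by
    intro l
    rw [Fintype.sum_sum_type]
    simp [Matrix.diagonal_apply, ite_smul, Finset.sum_ite_eq']
  have h2 : ∀ l : Fin n, (∑ B : Idx n,
      (Matrix.fromBlocks 0 (Matrix.diagonal d) (-(Matrix.diagonal d)) 0 : Matrix (Idx n) (Idx n) ℂ)
        (inr l) B • (ω (inr l) * ω B)) = d l • (ω (inl l) * ω (inr l)) := by
    intro l
    rw [Fintype.sum_sum_type]
    have : ∀ k : Fin n, ω (inr l) * ω (inl k) = -(ω (inl k) * ω (inr l)) := fun k =>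
      iota_swap _ _
    simp only [this, Matrix.fromBlocks_apply₂₁, Matrix.fromBlocks_apply₂₂, Matrix.neg_apply,
      Matrix.diagonal_apply, Matrix.zero_apply, zero_smul, Finset.sum_const_zero, add_zero,
      smul_neg, neg_smul, neg_neg, ite_smul]
    simp [Finset.sum_ite_eq']
  simp only [h1, h2]
  rw [← Finset.sum_add_distrib]
  refine Finset.sum_congr rfl fun l _ => ?_
  rw [← add_smul, two_mul]

lemma ofFn_smul_prod {A : Type*} [Ring A] [Algebra ℂ A] :
    ∀ (m : ℕ) (c : Fin m → ℂ) (x : Fin m → A),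
      (List.ofFn (fun l => c l • x l)).prod = (∏ l, c l) • (List.ofFn x).prod := by
  intro m
  induction m with
  | zero => simp
  | succ m ih =>
    intro c x
    rw [List.ofFn_succ, List.ofFn_succ, List.prod_cons, List.prod_cons, ih,
      Fin.prod_univ_succ, smul_mul_smul_comm]

def Jmat' (n : ℕ) : Matrix (Idx n) (Idx n) ℂ := Matrix.fromBlocks 0 1 (-1) 0

lemma map_qa_diag {n : ℕ} (ν : Fin n → ℝ) :
    (Matrix.diagonal (fun i => ((ν i : ℝ) : ℍ[ℝ]))).map qa
      = Matrix.diagonal (fun i => ((ν i : ℝ) : ℂ)) := by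
  ext i j
  simp only [Matrix.map_apply, Matrix.diagonal_apply]
  split <;> simp [qa, Complex.ext_iff]

lemma map_qb_diag {n : ℕ} (ν : Fin n → ℝ) :
    (Matrix.diagonal (fun i => ((ν i : ℝ) : ℍ[ℝ]))).map qb = 0 := by
  ext i j
  simp only [Matrix.map_apply, Matrix.diagonal_apply, Matrix.zero_apply]
  split <;> simp [qb, Complex.ext_iff]

lemma conjM_diag_real {n : ℕ} (ν : Fin n → ℝ) :
    conjM (Matrix.diagonal (fun i => ((ν i : ℝ) : ℂ))) = Matrix.diagonal (fun i => ((ν i : ℝ) : ℂ)) := by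
  ext i j
  simp only [conjM, Matrix.map_apply, Matrix.diagonal_apply]
  split <;> simp

lemma pow_sum_smul {n : ℕ} (c : Fin n → ℂ) :
    (∑ l : Fin n, c l • (ω (inl l) * ω (inr l))) ^ n
      = ((n.factorial : ℂ) * ∏ l, c l) • Ωn n := by
  have hcomm : ∀ x ∈ (List.ofFn fun l : Fin n => c l • (ω (inl l) * ω (inr l))),
      ∀ y ∈ (List.ofFn fun l : Fin n => c l • (ω (inl l) * ω (inr l))), x * y = y * x := by
    intro x hx y hy
    obtain ⟨l, rfl⟩ := List.mem_ofFn.1 hx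
    obtain ⟨m, rfl⟩ := List.mem_ofFn.1 hy
    rw [smul_mul_smul_comm, smul_mul_smul_comm, omega_pair_comm, mul_comm (c l)]
  have hsq : ∀ x ∈ (List.ofFn fun l : Fin n => c l • (ω (inl l) * ω (inr l))), x * x = 0 := by
    intro x hx
    obtain ⟨l, rfl⟩ := List.mem_ofFn.1 hx
    rw [smul_mul_smul_comm, omega_pair_sq, smul_zero]
  have h := list_sum_pow _ hcomm hsq
  rw [List.sum_ofFn, List.length_ofFn] at h
  have h2 : (List.ofFn fun l : Fin n => c l • (ω (inl l) * ω (inr l))).prod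
      = (∏ l, c l) • Ωn n := ofFn_smul_prod n c _
  rw [h, h2, ← Nat.cast_smul_eq_nsmul ℂ n.factorial, smul_smul]


end Helpers

set_option maxHeartbeats 1000000 in
/-- for a hyperhermitian 𝓜 diagonalized as 𝓔*𝓜𝓔 = diag(ν), the form
ω_𝓜 = Σ [τ(𝓜)J]_{AB} ω^A∧ω^B satisfies ω_𝓜^∧n = 2ⁿ·n!·(ν₀⋯ν_{n−1})·Ω_{2n}. -/
theorem stmt_9 {n : ℕ} (M : Matrix (Fin n) (Fin n) ℍ[ℝ]) (hM : Mᴴ = M)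
    (E : Matrix (Fin n) (Fin n) ℍ[ℝ]) (hE1 : Eᴴ * E = 1) (hE2 : E * Eᴴ = 1)
    (ν : Fin n → ℝ)
    (hdiag : Eᴴ * M * E = Matrix.diagonal (fun i => ((ν i : ℝ) : ℍ[ℝ]))) :
    (∑ A : Idx n, ∑ B : Idx n, (tau M * Jmat n) A B • (ω A * ω B)) ^ n =
      (((2 : ℂ) ^ n * (n.factorial : ℂ)) * (((∏ i, ν i : ℝ) : ℝ) : ℂ)) • Ωn n := by
  classical
  set Dm := Matrix.diagonal (fun i => ((ν i : ℝ) : ℍ[ℝ])) with hDm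
  have hMdec : M = E * Dm * Eᴴ := by
    rw [← hdiag]
    calc M = (E * Eᴴ) * M * (E * Eᴴ) := by rw [hE2, Matrix.one_mul, Matrix.mul_one]
    _ = E * (Eᴴ * M * E) * Eᴴ := by simp only [Matrix.mul_assoc]
  set N := tau E with hN
  -- tau Dm * Jmat n is an explicit block diagonal
  have htauD : tau Dm * Jmat n
      = Matrix.fromBlocks 0 (Matrix.diagonal fun i => ((ν i : ℝ) : ℂ))
          (-(Matrix.diagonal fun i => ((ν i : ℝ) : ℂ))) 0 := by
    rw [hDm, tau, map_qa_diag, map_qb_diag, conjM_zero, conjM_diag_real, neg_zero, Jmat,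
      Matrix.fromBlocks_multiply]
    simp only [Matrix.mul_zero, Matrix.zero_mul, Matrix.mul_one, Matrix.mul_neg,
      zero_add, add_zero, neg_zero]
  have key1 : tau M * Jmat n = N * (tau Dm * Jmat n) * Nᵀ := by
    rw [hMdec, tau_mul, tau_mul, Matrix.mul_assoc (tau E * tau Dm), tau_conjT_J]
    simp only [Matrix.mul_assoc]
    rfl
  have key2 : N * Jmat n * Nᵀ = Jmat n := by
    have h : tau (E * Eᴴ) * Jmat n = Jmat n := by rw [hE2, tau_one, Matrix.one_mul]
    rw [tau_mul, Matrix.mul_assoc, tau_conjT_J, ← Matrix.mul_assoc] at h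
    exact h
  set φ := ExteriorAlgebra.map (M := Vc n) (N := Vc n) (Matrix.mulVecLin N) with hφ
  -- the J-form is fixed by φ
  have hJdiag : Jmat n = Matrix.fromBlocks 0 (Matrix.diagonal fun _ : Fin n => (1:ℂ))
      (-(Matrix.diagonal fun _ : Fin n => (1:ℂ))) 0 := by
    rw [Jmat, Matrix.diagonal_one]
  have hσJ : (∑ A : Idx n, ∑ B : Idx n, (Jmat n) A B • (ω A * ω B))
      = ∑ l : Fin n, ((2 : ℂ) * 1) • (ω (inl l) * ω (inr l)) := by
    conv_lhs => rw [hJdiag]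
    exact sum_form (fun _ => 1)
  have hfixJ : φ (∑ A : Idx n, ∑ B : Idx n, (Jmat n) A B • (ω A * ω B))
      = ∑ A : Idx n, ∑ B : Idx n, (Jmat n) A B • (ω A * ω B) := by
    rw [hφ, transform N (Jmat n), key2]
  have hφΩ : φ (Ωn n) = Ωn n := by
    have h1 : φ ((∑ A : Idx n, ∑ B : Idx n, (Jmat n) A B • (ω A * ω B)) ^ n)
        = (∑ A : Idx n, ∑ B : Idx n, (Jmat n) A B • (ω A * ω B)) ^ n := by
      rw [map_pow, hfixJ]
    rw [hσJ, pow_sum_smul, _root_.map_smul] at h1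
    have hc : ((n.factorial : ℂ) * ∏ _l : Fin n, (2:ℂ) * 1) ≠ 0 := by
      simp [Nat.factorial_ne_zero]
    exact smul_right_injective (EA n) hc h1
  -- main computation
  have hsplit : (∑ A : Idx n, ∑ B : Idx n, (tau M * Jmat n) A B • (ω A * ω B))
      = φ (∑ A : Idx n, ∑ B : Idx n, (tau Dm * Jmat n) A B • (ω A * ω B)) := by
    rw [hφ, transform N (tau Dm * Jmat n), ← key1]
  have hωD : (∑ A : Idx n, ∑ B : Idx n, (tau Dm * Jmat n) A B • (ω A * ω B))
      = ∑ l : Fin n, ((2 : ℂ) * ((ν l : ℝ) : ℂ)) • (ω (inl l) * ω (inr l)) := by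
    conv_lhs => rw [htauD]
    exact sum_form _
  rw [hsplit, ← map_pow, hωD, pow_sum_smul, _root_.map_smul, hφΩ]
  congr 1
  rw [Finset.prod_mul_distrib, Finset.prod_const, Finset.card_univ, Fintype.card_fin]
  push_cast
  ring

end
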